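/- Let u : 𝔹ⁿ → (−1,1) be a pluriharmonic function on the unit ball of ℂⁿ. Then for every z ∈ 𝔹ⁿ, |∇u(z)| ≤ (4/π) (1 − u(z)²)/(1 − |z|²). -/

import Mathlib

set_option maxHeartbeats 1000000

open Metric Set Complex

lemma normSq_key (s t : ℂ) :
    normSq (1 + (starRingEnd ℂ) s * t) - normSq (t + s)
      = (1 - normSq s) * (1 - normSq t) := by
  simp only [normSq_apply, add_re, add_im, mul_re, mul_im, one_re, one_im,
    conj_re, conj_im]
  ring

lemma denom_ne {s t : ℂ} (hs : Norm.norm s < 1) (ht : Norm.norm t < 1) :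
    (1 : ℂ) + (starRingEnd ℂ) s * t ≠ 0 := by
  intro h
  have h1 : (starRingEnd ℂ) s * t = -1 := by linear_combination h
  have : Norm.norm ((starRingEnd ℂ) s * t) = 1 := by rw [h1]; simp
  rw [norm_mul, Complex.norm_conj] at this
  nlinarith [norm_nonneg s, norm_nonneg t]

lemma moebius_lt_one {s t : ℂ} (hs : Norm.norm s < 1) (ht : Norm.norm t < 1) :
    Norm.norm ((t + s) / (1 + (starRingEnd ℂ) s * t)) < 1 := by
  rw [norm_div, div_lt_one (by
    simpa [norm_pos_iff] using norm_pos_iff.2 (denom_ne hs ht))]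
  have h0 : Norm.norm (t + s) ^ 2 < Norm.norm (1 + (starRingEnd ℂ) s * t) ^ 2 := by
    rw [Complex.sq_norm, Complex.sq_norm]
    have key := normSq_key s t
    have hs' : normSq s < 1 := by rw [normSq_eq_norm_sq]; nlinarith [norm_nonneg s]
    have ht' : normSq t < 1 := by rw [normSq_eq_norm_sq]; nlinarith [norm_nonneg t]
    nlinarith
  have := norm_nonneg (1 + (starRingEnd ℂ) s * t)
  nlinarith [norm_nonneg (t + s)]

lemma cos_ne_zero_of_re {ζ : ℂ} (h : |ζ.re| < Real.pi / 2) : Complex.cos ζ ≠ 0 := by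
  intro h0
  obtain ⟨k, hk⟩ := Complex.cos_eq_zero_iff.1 h0
  have hre : ζ.re = (2 * (k : ℝ) + 1) * Real.pi / 2 := by
    rw [hk]; push_cast; simp
  rw [hre] at h
  have hpi := Real.pi_pos
  have h1 : (1 : ℝ) ≤ |2 * (k : ℝ) + 1| := by
    rcases le_or_gt 0 (k : ℝ) with hk0 | hk0
    · exact le_abs.2 (Or.inl (by linarith))
    · have : (k : ℝ) ≤ -1 := by exact_mod_cast Int.le_of_lt_add_one (by exact_mod_cast hk0)
      exact le_abs.2 (Or.inr (by linarith))
  rw [abs_div, abs_mul, abs_of_pos hpi, abs_of_pos (by norm_num : (0:ℝ) < 2)] at h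
  nlinarith

lemma normSq_cos_sub_sin (ζ : ℂ) :
    normSq (Complex.cos ζ) - normSq (Complex.sin ζ) = Real.cos (2 * ζ.re) := by
  have hcr : (Complex.cos ζ).re = Real.cos ζ.re * Real.cosh ζ.im := by
    rw [Complex.cos_eq]; simp [Complex.cos_ofReal_re, Complex.sin_ofReal_re, Complex.cosh_ofReal_re, Complex.sinh_ofReal_re]
  have hci : (Complex.cos ζ).im = -(Real.sin ζ.re * Real.sinh ζ.im) := by
    rw [Complex.cos_eq]; simp [Complex.cos_ofReal_re, Complex.sin_ofReal_re, Complex.cosh_ofReal_re, Complex.sinh_ofReal_re]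
  have hsr : (Complex.sin ζ).re = Real.sin ζ.re * Real.cosh ζ.im := by
    rw [Complex.sin_eq]; simp [Complex.cos_ofReal_re, Complex.sin_ofReal_re, Complex.cosh_ofReal_re, Complex.sinh_ofReal_re]
  have hsi : (Complex.sin ζ).im = Real.cos ζ.re * Real.sinh ζ.im := by
    rw [Complex.sin_eq]; simp [Complex.cos_ofReal_re, Complex.sin_ofReal_re, Complex.cosh_ofReal_re, Complex.sinh_ofReal_re]
  rw [normSq_apply, normSq_apply, hcr, hci, hsr, hsi, Real.cos_two_mul]
  have h1 := Real.cosh_sq_sub_sinh_sq ζ.im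
  have h2 := Real.sin_sq_add_cos_sq ζ.re
  nlinarith [h1, h2]

lemma abs_tan_lt_one {ζ : ℂ} (h : |ζ.re| < Real.pi / 4) :
    Norm.norm (Complex.tan ζ) < 1 := by
  have hpi := Real.pi_pos
  have hcos : Complex.cos ζ ≠ 0 := cos_ne_zero_of_re (by linarith [abs_nonneg ζ.re])
  have hC : 0 < normSq (Complex.cos ζ) := by
    simpa [normSq_pos] using hcos
  have hkey : 0 < Real.cos (2 * ζ.re) := by
    apply Real.cos_pos_of_mem_Ioo
    constructor <;> [nlinarith [abs_lt.1 h]; nlinarith [abs_lt.1 h]]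
  have hid := normSq_cos_sub_sin ζ
  rw [Complex.tan_eq_sin_div_cos, norm_div, div_lt_one (norm_pos_iff.2 hcos)]
  have h2 : Norm.norm (Complex.sin ζ) ^ 2 < Norm.norm (Complex.cos ζ) ^ 2 := by
    rw [Complex.sq_norm, Complex.sq_norm]; linarith
  nlinarith [norm_nonneg (Complex.sin ζ), norm_nonneg (Complex.cos ζ)]

lemma cos_pi_half_le_nonneg {u : ℝ} (h0 : 0 ≤ u) (h1 : u ≤ 1) :
    Real.cos (Real.pi * u / 2) ≤ 1 - u ^ 2 := by
  have hpi3 : 3.141592 < Real.pi := Real.pi_gt_d6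
  have hpi4 : Real.pi < 3.1416 := Real.pi_lt_d4
  rcases le_or_gt (Real.pi / 2 - 1) u with hc | hc
  · have he : Real.pi / 2 - Real.pi * u / 2 = Real.pi * (1 - u) / 2 := by ring
    have hs : Real.sin (Real.pi * (1 - u) / 2) ≤ Real.pi * (1 - u) / 2 :=
      Real.sin_le (by nlinarith)
    have : Real.cos (Real.pi * u / 2) = Real.sin (Real.pi * (1 - u) / 2) := by
      rw [← he, Real.sin_pi_div_two_sub]
    rw [this]
    nlinarith
  · set x := Real.pi * u / 2 with hx
    have hxabs : |x| ≤ 1 := by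
      rw [_root_.abs_of_nonneg (by positivity)]
      nlinarith
    have hb := Real.cos_bound hxabs
    rw [_root_.abs_of_nonneg (by positivity : (0:ℝ) ≤ x)] at hb
    have hb' : Real.cos x ≤ 1 - x ^ 2 / 2 + x ^ 4 * (5 / 96) := by
      have := abs_le.1 hb
      linarith [this.2]
    have hp2l : (9.8696 : ℝ) < Real.pi ^ 2 := by nlinarith
    have hp2u : Real.pi ^ 2 < 9.8697 := by nlinarith
    have hp4 : Real.pi ^ 4 < 97.42 := by nlinarith [hp2l, hp2u, sq_nonneg (Real.pi ^ 2 - 9.8697)]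
    have huu : u ^ 2 < 0.3259 := by nlinarith
    have t1 : u ^ 2 * u ^ 2 ≤ 0.3259 * u ^ 2 := by nlinarith [sq_nonneg u]
    calc Real.cos x ≤ 1 - x ^ 2 / 2 + x ^ 4 * (5 / 96) := hb'
      _ ≤ 1 - u ^ 2 := by
          rw [hx]
          nlinarith [sq_nonneg u, mul_nonneg (sq_nonneg u) (sq_nonneg u)]

lemma cos_pi_half_le {u : ℝ} (hu : |u| ≤ 1) : Real.cos (Real.pi * u / 2) ≤ 1 - u ^ 2 := by
  rcases le_or_gt 0 u with h0 | h0
  · exact cos_pi_half_le_nonneg h0 (abs_le.1 hu).2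
  · have h := cos_pi_half_le_nonneg (u := -u) (by linarith) (by
      have := (abs_le.1 hu).1; linarith)
    have he : Real.pi * -u / 2 = -(Real.pi * u / 2) := by ring
    rw [he, Real.cos_neg] at h
    nlinarith

lemma one_var {g : ℂ → ℂ} {a w g' : ℂ} {R : ℝ} (hR : 0 < R)
    (hg : DifferentiableOn ℂ g (ball a R))
    (hre : ∀ t ∈ ball a R, |(g t).re| < 1)
    (hw : w ∈ ball a R) (hg' : HasDerivAt g g' w) :
    Norm.norm g' ≤ (4 / Real.pi) * (1 - (g w).re ^ 2) * R
      / (R ^ 2 - Norm.norm (w - a) ^ 2) := by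
  have hpi := Real.pi_pos
  set d : ℝ := Norm.norm (w - a) with hd_def
  have hdlt : d < R := by
    have := mem_ball.1 hw
    rwa [Complex.dist_eq] at this
  have hd0 : 0 ≤ d := norm_nonneg _
  set s : ℂ := (w - a) / (R : ℂ) with hs_def
  have habs_s : Norm.norm s < 1 := by
    rw [hs_def, norm_div, Complex.norm_real, Real.norm_eq_abs, abs_of_pos hR, div_lt_one hR]
    exact hdlt
  set C4 : ℂ := ((Real.pi / 4 : ℝ) : ℂ) with hC4_def
  set φ : ℂ → ℂ := fun t => a + (R : ℂ) * ((t + s) / (1 + (starRingEnd ℂ) s * t)) with hφ_def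
  set h : ℂ → ℂ := fun t => Complex.tan (C4 * g t) with hh_def
  set b : ℂ := h w with hb_def
  set ψ : ℂ → ℂ := fun ζ => (ζ + -b) / (1 + (starRingEnd ℂ) (-b) * ζ) with hψ_def
  -- strip facts
  have hre_small : ∀ t ∈ ball a R, |(C4 * g t).re| < Real.pi / 4 := by
    intro t ht
    have : (C4 * g t).re = Real.pi / 4 * (g t).re := by
      rw [hC4_def, Complex.re_ofReal_mul]
    rw [this, abs_mul, abs_of_pos (by linarith : (0:ℝ) < Real.pi / 4)]
    have := hre t ht
    nlinarith
  have hcos : ∀ t ∈ ball a R, Complex.cos (C4 * g t) ≠ 0 := fun t ht =>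
    cos_ne_zero_of_re (by linarith [hre_small t ht])
  have habs_h : ∀ t ∈ ball a R, Norm.norm (h t) < 1 := fun t ht =>
    abs_tan_lt_one (hre_small t ht)
  have habs_b : Norm.norm b < 1 := habs_h w hw
  have habs_nb : Norm.norm (-b) < 1 := by rwa [norm_neg]
  -- maps
  have hmapφ : MapsTo φ (ball 0 1) (ball a R) := by
    intro t ht
    rw [mem_ball_zero_iff] at ht
    have ht' : Norm.norm t < 1 := ht
    rw [mem_ball, Complex.dist_eq]
    have : φ t - a = (R : ℂ) * ((t + s) / (1 + (starRingEnd ℂ) s * t)) := by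
      rw [hφ_def]; ring
    rw [this, norm_mul, Complex.norm_real, Real.norm_eq_abs, abs_of_pos hR]
    have := moebius_lt_one habs_s ht'
    nlinarith
  have hmap_hφ : MapsTo (h ∘ φ) (ball 0 1) (ball 0 1) := by
    intro t ht
    exact mem_ball_zero_iff.2 (habs_h (φ t) (hmapφ ht))
  have hmapψ : MapsTo ψ (ball 0 1) (ball 0 1) := by
    intro ζ hζ
    rw [mem_ball_zero_iff] at hζ ⊢
    exact moebius_lt_one habs_nb hζ
  -- differentiability
  have hdiffφ : DifferentiableOn ℂ φ (ball 0 1) := by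
    apply DifferentiableOn.const_add
    apply DifferentiableOn.const_mul
    apply DifferentiableOn.div
    · exact (differentiable_id.add_const s).differentiableOn
    · exact ((differentiable_id.const_mul _).const_add 1).differentiableOn
    · intro t ht
      exact denom_ne habs_s (mem_ball_zero_iff.1 ht)
  have hdiff_h : DifferentiableOn ℂ h (ball a R) := by
    intro t ht
    have h1 : DifferentiableAt ℂ g t := hg.differentiableAt (isOpen_ball.mem_nhds ht)
    have h2 : DifferentiableAt ℂ Complex.tan (C4 * g t) :=
      (Complex.hasDerivAt_tan (hcos t ht)).differentiableAt
    exact (h2.comp t (h1.const_mul C4)).differentiableWithinAt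
  have hdiffψ : DifferentiableOn ℂ ψ (ball 0 1) := by
    apply DifferentiableOn.div
    · exact (differentiable_id.add_const (-b)).differentiableOn
    · exact ((differentiable_id.const_mul _).const_add 1).differentiableOn
    · intro ζ hζ
      exact denom_ne habs_nb (mem_ball_zero_iff.1 hζ)
  set k : ℂ → ℂ := ψ ∘ h ∘ φ with hk_def
  have hdiffk : DifferentiableOn ℂ k (ball 0 1) :=
    hdiffψ.comp (hdiff_h.comp hdiffφ hmapφ) hmap_hφ
  have hRC : (R : ℂ) ≠ 0 := Complex.ofReal_ne_zero.2 (ne_of_gt hR)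
  have hφ0 : φ 0 = w := by
    rw [hφ_def]
    simp only [zero_add, mul_zero, add_zero, div_one]
    rw [hs_def]
    field_simp
    ring
  have hk0 : k 0 = 0 := by
    rw [hk_def]
    simp only [Function.comp_apply, hφ0, ← hb_def, hψ_def]
    simp
  have hmapk : MapsTo k (ball 0 1) (ball (k 0) 1) := by
    rw [hk0]
    exact hmapψ.comp (hmap_hφ)
  -- Schwarz lemma
  have habs1 : Norm.norm (deriv k 0) ≤ 1 := by
    have := Complex.norm_deriv_le_div_of_mapsTo_ball hdiffk (hmapk.mono_right ball_subset_closedBall) one_pos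
    simpa using this
  -- derivative computations
  have hden0 : (1 : ℂ) + (starRingEnd ℂ) s * 0 ≠ 0 := by simp
  have hNφ : HasDerivAt (fun t : ℂ => t + s) 1 0 := (hasDerivAt_id 0).add_const s
  have hDφ : HasDerivAt (fun t : ℂ => 1 + (starRingEnd ℂ) s * t) ((starRingEnd ℂ) s * 1) 0 :=
    HasDerivAt.const_add 1 (HasDerivAt.const_mul _ (hasDerivAt_id 0))
  set φd : ℂ := (R : ℂ) * ((1 * (1 + (starRingEnd ℂ) s * 0) - (0 + s) * ((starRingEnd ℂ) s * 1))
      / (1 + (starRingEnd ℂ) s * 0) ^ 2) with hφd_def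
  have hφ' : HasDerivAt φ φd 0 :=
    HasDerivAt.const_add a (HasDerivAt.const_mul (R : ℂ) (hNφ.div hDφ hden0))
  set ζ₀ : ℂ := C4 * g w with hζ₀_def
  set hd_val : ℂ := 1 / Complex.cos ζ₀ ^ 2 * (C4 * g') with hdval_def
  have hh' : HasDerivAt h hd_val w := by
    have h1 : HasDerivAt (fun t => C4 * g t) (C4 * g') w := HasDerivAt.const_mul C4 hg'
    exact (Complex.hasDerivAt_tan (hcos w hw)).comp w h1
  have hdenb : (1 : ℂ) + (starRingEnd ℂ) (-b) * b ≠ 0 := denom_ne habs_nb habs_b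
  have hNψ : HasDerivAt (fun ζ : ℂ => ζ + -b) 1 b := (hasDerivAt_id b).add_const (-b)
  have hDψ : HasDerivAt (fun ζ : ℂ => 1 + (starRingEnd ℂ) (-b) * ζ) ((starRingEnd ℂ) (-b) * 1) b :=
    HasDerivAt.const_add 1 (HasDerivAt.const_mul _ (hasDerivAt_id b))
  set ψd : ℂ := (1 * (1 + (starRingEnd ℂ) (-b) * b) - (b + -b) * ((starRingEnd ℂ) (-b) * 1))
      / (1 + (starRingEnd ℂ) (-b) * b) ^ 2 with hψd_def
  have hψ' : HasDerivAt ψ ψd b := hNψ.div hDψ hdenb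
  have hh'' : HasDerivAt h hd_val (φ 0) := by rw [hφ0]; exact hh'
  have hψ'' : HasDerivAt ψ ψd ((h ∘ φ) 0) := by
    show HasDerivAt ψ ψd (h (φ 0)); rw [hφ0]; exact hψ'
  have hk' : HasDerivAt k (ψd * (hd_val * φd)) 0 := hψ''.comp 0 (hh''.comp 0 hφ')
  rw [hk'.deriv, norm_mul, norm_mul] at habs1
  -- absolute values of the three factors
  set u : ℝ := (g w).re with hu_def
  have huabs : |u| < 1 := hre w hw
  set Cq : ℝ := normSq (Complex.cos ζ₀) with hCq_def
  set Sq : ℝ := normSq (Complex.sin ζ₀) with hSq_def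
  have hCqpos : 0 < Cq := by rw [hCq_def]; exact normSq_pos.2 (hcos w hw)
  have hnb : normSq b = Sq / Cq := by
    rw [hb_def, hh_def]
    show normSq (Complex.tan (C4 * g w)) = _
    rw [Complex.tan_eq_sin_div_cos, map_div₀, ← hζ₀_def]
  have hnb1 : normSq b < 1 := by
    rw [← Complex.sq_norm]; nlinarith [norm_nonneg b]
  have hSC : Sq < Cq := by
    rw [hnb] at hnb1
    calc Sq = Sq / Cq * Cq := by field_simp
    _ < 1 * Cq := by exact mul_lt_mul_of_pos_right hnb1 hCqpos
    _ = Cq := one_mul Cq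
  have hSq0 : 0 ≤ Sq := normSq_nonneg _
  -- factor 1 : ψd
  have hDeq : (1 : ℂ) + (starRingEnd ℂ) (-b) * b = ((1 - normSq b : ℝ) : ℂ) := by
    simp only [map_neg, neg_mul]
    rw [mul_comm ((starRingEnd ℂ) b) b, Complex.mul_conj]
    push_cast
    ring
  have hne : ((1 - normSq b : ℝ) : ℂ) ≠ 0 := by rw [← hDeq]; exact hdenb
  have hψdval : ψd = (((1 - normSq b : ℝ) : ℂ))⁻¹ := by
    rw [hψd_def, hDeq, add_neg_cancel, zero_mul, sub_zero, one_mul, sq,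
      div_mul_cancel_left₀ hne]
  have e1 : Norm.norm ψd = (1 - Sq / Cq)⁻¹ := by
    rw [hψdval, norm_inv, Complex.norm_real, Real.norm_eq_abs, abs_of_pos (by linarith), hnb]
  -- factor 2 : hd_val
  have e2 : Norm.norm hd_val = 1 / Cq * (Real.pi / 4 * Norm.norm g') := by
    rw [hdval_def, norm_mul, norm_div, norm_one, norm_pow, norm_mul, hC4_def,
      Complex.norm_real, Real.norm_eq_abs, abs_of_pos (by linarith : (0:ℝ) < Real.pi / 4),
      Complex.sq_norm, ← hCq_def]
  -- factor 3 : φd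
  have hns : normSq s = d ^ 2 / R ^ 2 := by
    rw [hs_def, map_div₀, Complex.normSq_ofReal, ← Complex.sq_norm, ← hd_def]
    ring_nf
  have hφdval : φd = ((R * (1 - normSq s) : ℝ) : ℂ) := by
    rw [hφd_def]
    rw [show ((0 : ℂ) + s) * ((starRingEnd ℂ) s * 1) = s * (starRingEnd ℂ) s by ring,
      Complex.mul_conj]
    push_cast
    ring
  have hns1 : normSq s < 1 := by
    rw [hns]
    rw [div_lt_one (by positivity)]
    nlinarith
  have e3 : Norm.norm φd = R * (1 - normSq s) := by
    rw [hφdval, Complex.norm_real, Real.norm_eq_abs, abs_of_pos (by nlinarith)]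
  rw [e1, e2, e3] at habs1
  -- key trigonometric bound
  have hζre : ζ₀.re = Real.pi / 4 * u := by
    rw [hζ₀_def, hC4_def, Complex.re_ofReal_mul, hu_def]
  have hkey : Cq - Sq ≤ 1 - u ^ 2 := by
    have := normSq_cos_sub_sin ζ₀
    rw [hζre] at this
    rw [hCq_def, hSq_def, this, show 2 * (Real.pi / 4 * u) = Real.pi * u / 2 by ring]
    exact cos_pi_half_le (le_of_lt huabs)
  -- final arithmetic
  have hG0 : 0 ≤ Norm.norm g' := norm_nonneg _
  have hRd : 0 < R ^ 2 - d ^ 2 := by nlinarith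
  have hfac : (1 - Sq / Cq)⁻¹ * (1 / Cq * (Real.pi / 4 * Norm.norm g') * (R * (1 - normSq s)))
      = Real.pi / 4 * Norm.norm g' * (R ^ 2 - d ^ 2) / ((Cq - Sq) * R) := by
    rw [hns]
    have h1 : Cq ≠ 0 := ne_of_gt hCqpos
    have h2 : Cq - Sq ≠ 0 := by nlinarith
    have h3 : R ≠ 0 := ne_of_gt hR
    field_simp
  rw [hfac] at habs1
  have hCS : 0 < Cq - Sq := by nlinarith
  have hmain : Real.pi / 4 * Norm.norm g' * (R ^ 2 - d ^ 2) ≤ (Cq - Sq) * R := by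
    have hpos : 0 < (Cq - Sq) * R := by positivity
    calc Real.pi / 4 * Norm.norm g' * (R ^ 2 - d ^ 2)
        = Real.pi / 4 * Norm.norm g' * (R ^ 2 - d ^ 2) / ((Cq - Sq) * R) * ((Cq - Sq) * R) := by
          field_simp
      _ ≤ 1 * ((Cq - Sq) * R) := mul_le_mul_of_nonneg_right habs1 (le_of_lt hpos)
      _ = (Cq - Sq) * R := one_mul _
  have h4pi : (0:ℝ) < 4 / Real.pi := by positivity
  rw [le_div_iff₀ hRd]
  calc Norm.norm g' * (R ^ 2 - d ^ 2)
      = 4 / Real.pi * (Real.pi / 4 * Norm.norm g' * (R ^ 2 - d ^ 2)) := by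
        field_simp
    _ ≤ 4 / Real.pi * ((1 - u ^ 2) * R) := by
        apply mul_le_mul_of_nonneg_left _ h4pi.le
        nlinarith [hkey, hR, hmain]
    _ = 4 / Real.pi * (1 - u ^ 2) * R := by ring

theorem schwarz_pick_pluriharmonic (n : ℕ) (hn : 1 ≤ n)
    (u : EuclideanSpace ℂ (Fin n) → ℝ)
    (hu : ∃ F : EuclideanSpace ℂ (Fin n) → ℂ,
      DifferentiableOn ℂ F (ball (0 : EuclideanSpace ℂ (Fin n)) 1) ∧
      ∀ z ∈ ball (0 : EuclideanSpace ℂ (Fin n)) 1, u z = (F z).re)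
    (hrange : ∀ z ∈ ball (0 : EuclideanSpace ℂ (Fin n)) 1, u z ∈ Ioo (-1 : ℝ) 1) :
    ∀ z ∈ ball (0 : EuclideanSpace ℂ (Fin n)) 1,
      ‖fderiv ℝ u z‖ ≤ (4 / Real.pi) * (1 - (u z) ^ 2) / (1 - ‖z‖ ^ 2) := by
  intro z hz
  obtain ⟨F, hF, hFu⟩ := hu
  have hpi := Real.pi_pos
  have hz1 : ‖z‖ < 1 := mem_ball_zero_iff.1 hz
  have hz0 : (0:ℝ) ≤ ‖z‖ := norm_nonneg z
  have huz := hrange z hz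
  have hu2 : u z ^ 2 < 1 := by
    obtain ⟨h1, h2⟩ := huz
    nlinarith
  have hzz : (0:ℝ) < 1 - ‖z‖ ^ 2 := by nlinarith
  have hM0 : 0 ≤ 4 / Real.pi * (1 - u z ^ 2) / (1 - ‖z‖ ^ 2) :=
    div_nonneg (mul_nonneg (by positivity) (by nlinarith)) hzz.le
  -- replace u by Re ∘ F near z
  have hEq : u =ᶠ[nhds z] fun w => (F w).re :=
    Filter.eventuallyEq_of_mem (isOpen_ball.mem_nhds hz) (fun w hw => hFu w hw)
  have hFz : DifferentiableAt ℂ F z := hF.differentiableAt (isOpen_ball.mem_nhds hz)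
  set L := fderiv ℂ F z with hL_def
  have hRe : HasFDerivAt (fun w => (F w).re)
      ((Complex.reCLM : ℂ →L[ℝ] ℝ).comp (L.restrictScalars ℝ)) z :=
    (Complex.reCLM.hasFDerivAt).comp z (hFz.hasFDerivAt.restrictScalars ℝ)
  rw [hEq.fderiv_eq, hRe.fderiv]
  -- key claim for unit vectors
  have claim : ∀ v : EuclideanSpace ℂ (Fin n), ‖v‖ = 1 →
      ‖L v‖ ≤ 4 / Real.pi * (1 - u z ^ 2) / (1 - ‖z‖ ^ 2) := by
    intro v hv
    set c : ℂ := (inner ℂ z v : ℂ) with hc_def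
    have hcle : Norm.norm c ≤ ‖z‖ := by
      have := norm_inner_le_norm (𝕜 := ℂ) z v
      rw [hv, mul_one] at this
      simpa using this
    have hc0 : (0:ℝ) ≤ Norm.norm c := norm_nonneg c
    have hR2pos : (0:ℝ) < 1 - ‖z‖ ^ 2 + Norm.norm c ^ 2 := by nlinarith
    set R : ℝ := Real.sqrt (1 - ‖z‖ ^ 2 + Norm.norm c ^ 2) with hR_def
    have hR : 0 < R := Real.sqrt_pos.2 hR2pos
    have hRsq : R ^ 2 = 1 - ‖z‖ ^ 2 + Norm.norm c ^ 2 := Real.sq_sqrt hR2pos.le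
    have hR1 : R ≤ 1 := by nlinarith
    set t₀ : ℂ := -((starRingEnd ℂ) c) with ht₀_def
    set ℓ : ℂ → EuclideanSpace ℂ (Fin n) := fun t => z + t • v with hℓ_def
    have hnorm : ∀ t : ℂ, ‖ℓ t‖ ^ 2
        = ‖z‖ ^ 2 - Norm.norm c ^ 2 + Norm.norm (t - t₀) ^ 2 := by
      intro t
      have h1 : ‖ℓ t‖ ^ 2 = ‖z‖ ^ 2 + 2 * Complex.re (inner ℂ z (t • v)) + ‖t • v‖ ^ 2 := by
        rw [hℓ_def]
        exact norm_add_sq (𝕜 := ℂ) z (t • v)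
      rw [h1]
      have h2 : (inner ℂ z (t • v) : ℂ) = t * c := by
        rw [inner_smul_right, hc_def]
      have h3 : ‖t • v‖ = Norm.norm t := by
        rw [norm_smul, hv, mul_one]
      have h4 : t - t₀ = t + (starRingEnd ℂ) c := by rw [ht₀_def]; ring
      rw [h2, h3, h4]
      have h5 : Norm.norm (t + (starRingEnd ℂ) c) ^ 2
          = Norm.norm t ^ 2 + Norm.norm c ^ 2 + 2 * (t * c).re := by
        rw [← Complex.normSq_eq_norm_sq, Complex.normSq_add, Complex.normSq_conj,
          Complex.conj_conj, Complex.normSq_eq_norm_sq, Complex.normSq_eq_norm_sq]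
      rw [h5]
      ring
    have hmaps : ∀ t ∈ ball t₀ R, ℓ t ∈ ball (0 : EuclideanSpace ℂ (Fin n)) 1 := by
      intro t ht
      rw [mem_ball, Complex.dist_eq] at ht
      rw [mem_ball_zero_iff]
      have := hnorm t
      nlinarith [norm_nonneg (ℓ t), norm_nonneg (t - t₀)]
    set g : ℂ → ℂ := F ∘ ℓ with hg_def
    have hgdiff : DifferentiableOn ℂ g (ball t₀ R) := by
      intro t ht
      have h1 : DifferentiableAt ℂ F (ℓ t) :=
        hF.differentiableAt (isOpen_ball.mem_nhds (hmaps t ht))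
      have h2 : DifferentiableAt ℂ ℓ t :=
        ((differentiableAt_id.smul_const v).const_add z)
      exact (h1.comp t h2).differentiableWithinAt
    have hgre : ∀ t ∈ ball t₀ R, |(g t).re| < 1 := by
      intro t ht
      have h1 := hmaps t ht
      have h2 := hrange (ℓ t) h1
      rw [hg_def, Function.comp_apply, ← hFu (ℓ t) h1]
      rw [abs_lt]
      exact ⟨h2.1, h2.2⟩
    have h0mem : (0:ℂ) ∈ ball t₀ R := by
      rw [mem_ball, Complex.dist_eq]
      have : (0:ℂ) - t₀ = (starRingEnd ℂ) c := by rw [ht₀_def]; ring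
      rw [this, Complex.norm_conj]
      nlinarith
    have hg'0 : HasDerivAt g (L v) 0 := by
      have hℓ' : HasDerivAt ℓ v 0 := by
        have := ((hasDerivAt_id (0:ℂ)).smul_const v).const_add z
        simpa [hℓ_def] using this
      have hFd : HasFDerivAt F L (ℓ 0) := by
        have : ℓ 0 = z := by rw [hℓ_def]; simp
        rw [this]
        exact hFz.hasFDerivAt
      exact hFd.comp_hasDerivAt 0 hℓ'
    have hbound := one_var hR hgdiff hgre h0mem hg'0
    have hg0 : (g 0).re = u z := by
      have : ℓ 0 = z := by rw [hℓ_def]; simp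
      rw [hg_def, Function.comp_apply, this, ← hFu z hz]
    have habs0 : Norm.norm ((0:ℂ) - t₀) = Norm.norm c := by
      have : (0:ℂ) - t₀ = (starRingEnd ℂ) c := by rw [ht₀_def]; ring
      rw [this, Complex.norm_conj]
    rw [hg0, habs0] at hbound
    calc Norm.norm (L v)
        ≤ 4 / Real.pi * (1 - u z ^ 2) * R / (R ^ 2 - Norm.norm c ^ 2) := hbound
      _ ≤ 4 / Real.pi * (1 - u z ^ 2) / (1 - ‖z‖ ^ 2) := by
          have he : R ^ 2 - Norm.norm c ^ 2 = 1 - ‖z‖ ^ 2 := by rw [hRsq]; ring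
          rw [he]
          apply (div_le_div_iff_of_pos_right hzz).2
          have hA : 0 ≤ 4 / Real.pi * (1 - u z ^ 2) :=
            mul_nonneg (by positivity) (by nlinarith)
          nlinarith [hA, hR1]
  -- conclude the operator norm bound
  apply ContinuousLinearMap.opNorm_le_bound _ hM0
  intro v
  have hval : ((Complex.reCLM : ℂ →L[ℝ] ℝ).comp (L.restrictScalars ℝ)) v = (L v).re := rfl
  rw [hval]
  have hre_le : ‖(L v).re‖ ≤ ‖L v‖ := by
    rw [Real.norm_eq_abs]
    exact Complex.abs_re_le_norm (L v)
  rcases eq_or_ne v 0 with rfl | hv0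
  · simp [hM0]
  · have hvn : (0:ℝ) < ‖v‖ := norm_pos_iff.2 hv0
    have hsc : ‖((↑(‖v‖⁻¹) : ℂ)) • v‖ = 1 := by
      rw [norm_smul, Complex.norm_real, Real.norm_eq_abs, abs_of_pos (by positivity),
        inv_mul_cancel₀ hvn.ne']
    have hcl := claim _ hsc
    have hsmul : L ((↑(‖v‖⁻¹) : ℂ) • v) = (↑(‖v‖⁻¹) : ℂ) * L v := by
      rw [map_smul, smul_eq_mul]
    rw [hsmul] at hcl
    have hnorm_eq : ‖(↑(‖v‖⁻¹) : ℂ) * L v‖ = ‖v‖⁻¹ * ‖L v‖ := by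
      rw [norm_mul, Complex.norm_real, Real.norm_eq_abs, abs_of_pos (by positivity)]
    rw [hnorm_eq] at hcl
    calc ‖(L v).re‖ ≤ ‖L v‖ := hre_le
      _ = ‖v‖ * (‖v‖⁻¹ * ‖L v‖) := by field_simp
      _ ≤ ‖v‖ * (4 / Real.pi * (1 - u z ^ 2) / (1 - ‖z‖ ^ 2)) :=
          mul_le_mul_of_nonneg_left hcl hvn.le
      _ = 4 / Real.pi * (1 - u z ^ 2) / (1 - ‖z‖ ^ 2) * ‖v‖ := by ring
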